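/- For every natural number n and every word w ∈ {0,1}^n there exist polynomials p₁, p₂, p₃, p₄ in one variable with natural number coefficients such that for all positive integers u and v, M_{u,v}(w) = [[p₁(uv), v·p₂(uv)], [u·p₃(uv), p₄(uv)]]; moreover 2·deg p₁ ≤ n and 2·deg p₄ ≤ n, and if p₂ ≠ 0 then 2·deg p₂ + 1 ≤ n, and if p₃ ≠ 0 then 2·deg p₃ + 1 ≤ n (so each entry, viewed as a polynomial in u and v, has total degree at most n). -/
import Mathlib


open Matrix Finset

def Lm (u : ℕ) : Matrix (Fin 2) (Fin 2) ℕ := !![1, 0; u, 1]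
def Rm (v : ℕ) : Matrix (Fin 2) (Fin 2) ℕ := !![1, v; 0, 1]

/-- The product of the matrices corresponding to a word: `false ↦ L_u`, `true ↦ R_v`. -/
def wordProd (u v : ℕ) (w : List Bool) : Matrix (Fin 2) (Fin 2) ℕ :=
  (w.map (fun b => if b then Rm v else Lm u)).prod

/-- μ of a matrix: maximum of the four entries. -/
def matMax (M : Matrix (Fin 2) (Fin 2) ℕ) : ℕ :=
  max (max (M 0 0) (M 0 1)) (max (M 1 0) (M 1 1))

/-- μ(𝒯^{(u,v)}(I₂;n)): maximum of μ over all products of exactly n matrices each L_u or R_v. -/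
def levelMax (u v n : ℕ) : ℕ :=
  Finset.univ.sup (fun w : Fin n → Bool => matMax (wordProd u v (List.ofFn w)))

open Polynomial in
theorem aux16 (w : List Bool) :
    ∃ p₁ p₂ p₃ p₄ : Polynomial ℕ,
      (∀ u v : ℕ, 1 ≤ u → 1 ≤ v →
        wordProd u v w =
          !![p₁.eval (u * v), v * p₂.eval (u * v);
             u * p₃.eval (u * v), p₄.eval (u * v)]) ∧
      2 * p₁.natDegree ≤ w.length ∧ 2 * p₄.natDegree ≤ w.length ∧
      (p₂ ≠ 0 → 2 * p₂.natDegree + 1 ≤ w.length) ∧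
      (p₃ ≠ 0 → 2 * p₃.natDegree + 1 ≤ w.length) := by
  induction w with
  | nil =>
    refine ⟨1, 0, 0, 1, ?_, by simp, by simp, by simp, by simp⟩
    intro u v hu hv
    simp [wordProd, Matrix.one_fin_two]
  | cons b t ih =>
    obtain ⟨p₁, p₂, p₃, p₄, heq, h₁, h₄, h₂, h₃⟩ := ih
    have hcons : ∀ u v, wordProd u v (b :: t)
        = (if b then Rm v else Lm u) * wordProd u v t := by
      intro u v; simp [wordProd]
    cases b with
    | false =>
      refine ⟨p₁, p₂, p₁ + p₃, X * p₂ + p₄, ?_, ?_, ?_, ?_, ?_⟩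
      · intro u v hu hv
        rw [hcons, heq u v hu hv]
        show Lm u * _ = _
        rw [Lm, Matrix.mul_fin_two]
        ext i j
        fin_cases i <;> fin_cases j <;>
          first
          | (simp only [eval_add, eval_mul, eval_X, Matrix.cons_val', Matrix.cons_val_zero,
              Matrix.cons_val_one, Matrix.head_cons, Matrix.empty_val',
              Matrix.cons_val_fin_one, Matrix.head_fin_const, Matrix.of_apply]; ring)
          | rfl
      · simpa using Nat.le_succ_of_le h₁
      · by_cases hp : p₂ = 0
        · simp only [hp, mul_zero, zero_add]
          simpa using Nat.le_succ_of_le h₄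
        · have := h₂ hp
          have hb : (X * p₂ + p₄).natDegree ≤ max (1 + p₂.natDegree) p₄.natDegree := by
            refine le_trans (natDegree_add_le _ _) ?_
            gcongr
            exact le_trans (natDegree_mul_le) (by simp)
          simp only [List.length_cons]
          rcases max_le_iff.mp (le_refl (max (1 + p₂.natDegree) p₄.natDegree)) with ⟨_, _⟩
          omega
      · intro hp
        have := h₂ hp
        simp only [List.length_cons]
        omega
      · intro _
        have hb : (p₁ + p₃).natDegree ≤ max p₁.natDegree p₃.natDegree := natDegree_add_le _ _
        have h3' : 2 * p₃.natDegree ≤ t.length := by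
          by_cases hp : p₃ = 0
          · simp [hp]
          · have := h₃ hp; omega
        simp only [List.length_cons]
        have := max_le_iff.mp (le_refl (max p₁.natDegree p₃.natDegree))
        omega
    | true =>
      refine ⟨p₁ + X * p₃, p₂ + p₄, p₃, p₄, ?_, ?_, ?_, ?_, ?_⟩
      · intro u v hu hv
        rw [hcons, heq u v hu hv]
        show Rm v * _ = _
        rw [Rm, Matrix.mul_fin_two]
        ext i j
        fin_cases i <;> fin_cases j <;>
          first
          | (simp only [eval_add, eval_mul, eval_X, Matrix.cons_val', Matrix.cons_val_zero,
              Matrix.cons_val_one, Matrix.head_cons, Matrix.empty_val',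
              Matrix.cons_val_fin_one, Matrix.head_fin_const, Matrix.of_apply]; ring)
          | rfl
      · by_cases hp : p₃ = 0
        · simp only [hp, mul_zero, add_zero]
          simpa using Nat.le_succ_of_le h₁
        · have := h₃ hp
          have hb : (p₁ + X * p₃).natDegree ≤ max p₁.natDegree (1 + p₃.natDegree) := by
            refine le_trans (natDegree_add_le _ _) ?_
            gcongr
            exact le_trans (natDegree_mul_le) (by simp)
          simp only [List.length_cons]
          have := max_le_iff.mp (le_refl (max p₁.natDegree (1 + p₃.natDegree)))
          omega
      · simpa using Nat.le_succ_of_le h₄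
      · intro _
        have hb : (p₂ + p₄).natDegree ≤ max p₂.natDegree p₄.natDegree := natDegree_add_le _ _
        have h2' : 2 * p₂.natDegree ≤ t.length := by
          by_cases hp : p₂ = 0
          · simp [hp]
          · have := h₂ hp; omega
        simp only [List.length_cons]
        have := max_le_iff.mp (le_refl (max p₂.natDegree p₄.natDegree))
        omega
      · intro hp
        have := h₃ hp
        simp only [List.length_cons]
        omega

theorem stmt16 (n : ℕ) (w : List Bool) (hw : w.length = n) :
    ∃ p₁ p₂ p₃ p₄ : Polynomial ℕ,
      (∀ u v : ℕ, 1 ≤ u → 1 ≤ v →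
        wordProd u v w =
          !![p₁.eval (u * v), v * p₂.eval (u * v);
             u * p₃.eval (u * v), p₄.eval (u * v)]) ∧
      2 * p₁.natDegree ≤ n ∧ 2 * p₄.natDegree ≤ n ∧
      (p₂ ≠ 0 → 2 * p₂.natDegree + 1 ≤ n) ∧
      (p₃ ≠ 0 → 2 * p₃.natDegree + 1 ≤ n) := by
  subst hw
  exact aux16 w
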